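/- arXiv:2512.17690 — 2 statements merged into one kernel-verified Lean document; each statement's English description precedes it below -/
import Mathlib

section
/- For every real q ≥ 1, every N ≥ 1 and all natural numbers d_1, …, d_N with n = d_1 + … + d_N, one has q^{D} · [d_1]_q! ⋯ [d_N]_q! / [n]_q! ≤ 1, where D = Σ_{1 ≤ i < j ≤ N} d_i d_j. -/
/-- The balanced `q`-integer: `[k]_q = (q^k - q^{-k})/(q - q⁻¹)` for `q ≠ 1`, and `[k]_1 = k`. -/
noncomputable def qint (q : ℝ) (n : ℕ) : ℝ :=
  if q = 1 then n else (q ^ n - q⁻¹ ^ n) / (q - q⁻¹)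

/-- The balanced `q`-factorial `[k]_q! = [k]_q [k-1]_q ⋯ [1]_q`, with `[0]_q! = 1`. -/
noncomputable def qfact (q : ℝ) (n : ℕ) : ℝ :=
  ∏ i ∈ Finset.range n, qint q (i + 1)

lemma qint_one (q : ℝ) (hq : 1 ≤ q) : qint q 1 = 1 := by
  unfold qint
  split_ifs with h
  · norm_num
  · have hq1 : 1 < q := lt_of_le_of_ne hq (Ne.symm h)
    have h0 : q - q⁻¹ ≠ 0 := by
      have : q⁻¹ < 1 := inv_lt_one_of_one_lt₀ hq1
      nlinarith
    field_simp
    rw [div_self (ne_of_gt (by nlinarith : (0:ℝ) < q ^ 2 - 1))]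

lemma qint_step (q : ℝ) (hq : 1 ≤ q) (k : ℕ) : q * qint q k ≤ qint q (k + 1) := by
  unfold qint
  split_ifs with h
  · subst h; push_cast; nlinarith [Nat.cast_nonneg (α := ℝ) k]
  · have hq1 : 1 < q := lt_of_le_of_ne hq (Ne.symm h)
    have hinv : q⁻¹ < 1 := inv_lt_one_of_one_lt₀ hq1
    have hd : 0 < q - q⁻¹ := by nlinarith
    rw [← mul_div_assoc, div_le_div_iff₀ hd hd]
    have hik : (0:ℝ) < q⁻¹ ^ k := pow_pos (by positivity) k
    have h1 : q⁻¹ ^ (k + 1) = q⁻¹ * q⁻¹ ^ k := by ring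
    have h2 : q ^ (k + 1) = q * q ^ k := by ring
    nlinarith [mul_pos hd hik, mul_pos hd hd]

lemma qint_ge_one (q : ℝ) (hq : 1 ≤ q) (k : ℕ) : 1 ≤ qint q (k + 1) := by
  induction k with
  | zero => rw [qint_one q hq]
  | succ k ih =>
      have h := qint_step q hq (k + 1)
      have : qint q (k + 1) ≤ q * qint q (k + 1) :=
        le_mul_of_one_le_left (by linarith) hq
      linarith

lemma qfact_ge_one (q : ℝ) (hq : 1 ≤ q) (n : ℕ) : 1 ≤ qfact q n := by
  unfold qfact
  induction n with
  | zero => simp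
  | succ n ih =>
      rw [Finset.prod_range_succ]
      have := qint_ge_one q hq n
      nlinarith

lemma qfact_pos (q : ℝ) (hq : 1 ≤ q) (n : ℕ) : 0 < qfact q n :=
  lt_of_lt_of_le one_pos (qfact_ge_one q hq n)

lemma pow_mul_qint (q : ℝ) (hq : 1 ≤ q) (a b : ℕ) :
    q ^ a * qint q (b + 1) ≤ qint q (a + b + 1) := by
  induction a with
  | zero => simp
  | succ a ih =>
      have hq0 : 0 < q := lt_of_lt_of_le one_pos hq
      calc q ^ (a + 1) * qint q (b + 1) = q * (q ^ a * qint q (b + 1)) := by ring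
        _ ≤ q * qint q (a + b + 1) := by
            apply mul_le_mul_of_nonneg_left ih (le_of_lt hq0)
        _ ≤ qint q (a + b + 1 + 1) := qint_step q hq (a + b + 1)
        _ = qint q (a + 1 + b + 1) := by ring_nf

lemma qfact_mul (q : ℝ) (hq : 1 ≤ q) (a b : ℕ) :
    q ^ (a * b) * qfact q a * qfact q b ≤ qfact q (a + b) := by
  induction b with
  | zero => simp [qfact]
  | succ b ih =>
      have hq0 : 0 < q := lt_of_lt_of_le one_pos hq
      have hfb : qfact q (b + 1) = qfact q b * qint q (b + 1) := by
        unfold qfact; rw [Finset.prod_range_succ]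
      have hfab : qfact q (a + (b + 1)) = qfact q (a + b) * qint q (a + b + 1) := by
        unfold qfact
        rw [show a + (b + 1) = (a + b) + 1 by ring, Finset.prod_range_succ]
      rw [hfb, hfab]
      have h1 : q ^ (a * (b + 1)) * qfact q a * (qfact q b * qint q (b + 1))
          = (q ^ (a * b) * qfact q a * qfact q b) * (q ^ a * qint q (b + 1)) := by
        rw [show a * (b + 1) = a * b + a by ring, pow_add]; ring
      rw [h1]
      have hA := pow_mul_qint q hq a b
      have hB : 0 ≤ q ^ (a * b) * qfact q a * qfact q b := by
        have := qfact_pos q hq a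
        have := qfact_pos q hq b
        positivity
      have hC : 0 ≤ q ^ a * qint q (b + 1) := by
        have := qint_ge_one q hq b
        positivity
      calc (q ^ (a * b) * qfact q a * qfact q b) * (q ^ a * qint q (b + 1))
          ≤ qfact q (a + b) * (q ^ a * qint q (b + 1)) :=
            mul_le_mul_of_nonneg_right ih hC
        _ ≤ qfact q (a + b) * qint q (a + b + 1) :=
            mul_le_mul_of_nonneg_left hA (le_of_lt (qfact_pos q hq (a + b)))

lemma main_lemma (q : ℝ) (hq : 1 ≤ q) (d : ℕ → ℕ) : ∀ N : ℕ,
    q ^ (∑ j ∈ Finset.Icc 1 N, ∑ i ∈ Finset.Icc 1 (j - 1), d i * d j) *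
      ∏ i ∈ Finset.Icc 1 N, qfact q (d i) ≤ qfact q (∑ k ∈ Finset.Icc 1 N, d k) := by
  intro N
  induction N with
  | zero => simp [qfact]
  | succ N ih =>
      have hle : 1 ≤ N + 1 := by omega
      rw [Finset.sum_Icc_succ_top hle, Finset.sum_Icc_succ_top hle,
        Finset.prod_Icc_succ_top hle]
      set m := ∑ k ∈ Finset.Icc 1 N, d k with hm
      set Dn := ∑ j ∈ Finset.Icc 1 N, ∑ i ∈ Finset.Icc 1 (j - 1), d i * d j with hDn
      have hsimp : ∑ i ∈ Finset.Icc 1 (N + 1 - 1), d i * d (N + 1) = m * d (N + 1) := by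
        rw [show N + 1 - 1 = N by omega, hm, Finset.sum_mul]
      rw [hsimp, pow_add]
      have hq0 : 0 < q := lt_of_lt_of_le one_pos hq
      have h1 : q ^ Dn * q ^ (m * d (N + 1)) *
          ((∏ i ∈ Finset.Icc 1 N, qfact q (d i)) * qfact q (d (N + 1)))
          = (q ^ Dn * ∏ i ∈ Finset.Icc 1 N, qfact q (d i)) *
            (q ^ (m * d (N + 1)) * qfact q (d (N + 1))) := by ring
      rw [h1]
      have hC : 0 ≤ q ^ (m * d (N + 1)) * qfact q (d (N + 1)) := by
        have := qfact_pos q hq (d (N + 1))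
        positivity
      calc (q ^ Dn * ∏ i ∈ Finset.Icc 1 N, qfact q (d i)) *
            (q ^ (m * d (N + 1)) * qfact q (d (N + 1)))
          ≤ qfact q m * (q ^ (m * d (N + 1)) * qfact q (d (N + 1))) :=
            mul_le_mul_of_nonneg_right ih hC
        _ = q ^ (m * d (N + 1)) * qfact q m * qfact q (d (N + 1)) := by ring
        _ ≤ qfact q (m + d (N + 1)) := qfact_mul q hq m (d (N + 1))

theorem stmt_4 (q : ℝ) (hq : 1 ≤ q) (N : ℕ) (hN : 1 ≤ N)
    (d : ℕ → ℕ) (n : ℕ) (hn : n = ∑ k ∈ Finset.Icc 1 N, d k)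
    (D : ℕ) (hD : D = ∑ j ∈ Finset.Icc 1 N, ∑ i ∈ Finset.Icc 1 (j - 1), d i * d j) :
    q ^ D * (∏ i ∈ Finset.Icc 1 N, qfact q (d i)) / qfact q n ≤ 1 := by
  rw [div_le_one (qfact_pos q hq n), hn, hD]
  exact main_lemma q hq d N
end

section
/- Let H be a Hilbert space and p, q two orthogonal projections on H of equal finite rank. If ‖(1 − q)p‖ < 1, then ‖(1 − p)q‖ < 1 as well; consequently ‖p − q‖ = max(‖(1−q)p‖, ‖(1−p)q‖) < 1. -/
set_option maxHeartbeats 1000000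

open scoped InnerProductSpace

section Helpers
variable {H : Type*} [NormedAddCommGroup H] [InnerProductSpace ℂ H] [CompleteSpace H]

lemma proj_apply_apply (P : H →L[ℂ] H) (hP : IsIdempotentElem P) (y : H) : P (P y) = P y := by
  have := congrArg (fun T : H →L[ℂ] H => T y) hP
  simpa [ContinuousLinearMap.mul_apply] using this

/-- Pythagoras for a self-adjoint idempotent. -/
lemma proj_pyth (P : H →L[ℂ] H) (hP : IsIdempotentElem P) (hPsa : IsSelfAdjoint P) (x : H) :
    ‖P x‖ * ‖P x‖ + ‖x - P x‖ * ‖x - P x‖ = ‖x‖ * ‖x‖ := by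
  have h0 : ⟪P x, x - P x⟫_ℂ = 0 := by
    have hs : ⟪P x, x - P x⟫_ℂ = ⟪x, P (x - P x)⟫_ℂ := hPsa.isSymmetric x (x - P x)
    rw [hs]
    simp [map_sub, proj_apply_apply P hP]
  have := norm_add_sq_eq_norm_sq_add_norm_sq_of_inner_eq_zero (P x) (x - P x) h0
  simpa [add_sub_cancel] using this.symm

lemma proj_norm_apply_le (P : H →L[ℂ] H) (hP : IsIdempotentElem P) (hPsa : IsSelfAdjoint P)
    (x : H) : ‖P x‖ ≤ ‖x‖ := by
  have := proj_pyth P hP hPsa x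
  nlinarith [norm_nonneg (P x), norm_nonneg x, norm_nonneg (x - P x)]

lemma proj_norm_le_one (P : H →L[ℂ] H) (hP : IsIdempotentElem P) (hPsa : IsSelfAdjoint P) :
    ‖P‖ ≤ 1 := by
  refine ContinuousLinearMap.opNorm_le_bound P zero_le_one fun x => ?_
  simpa using proj_norm_apply_le P hP hPsa x

end Helpers

/-- For two orthogonal projections `P`, `Q` of equal finite rank on a Hilbert space with
`‖(1-Q)P‖ < 1`, one also has `‖(1-P)Q‖ < 1`, and `‖P - Q‖ = max(‖(1-Q)P‖, ‖(1-P)Q‖) < 1`. -/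
theorem stmt_11 {H : Type*} [NormedAddCommGroup H] [InnerProductSpace ℂ H] [CompleteSpace H]
    (P Q : H →L[ℂ] H)
    (hPidem : IsIdempotentElem P) (hQidem : IsIdempotentElem Q)
    (hPsa : IsSelfAdjoint P) (hQsa : IsSelfAdjoint Q)
    (hPfin : FiniteDimensional ℂ (LinearMap.range (P : H →ₗ[ℂ] H)))
    (hQfin : FiniteDimensional ℂ (LinearMap.range (Q : H →ₗ[ℂ] H)))
    (hrank : Module.finrank ℂ (LinearMap.range (P : H →ₗ[ℂ] H)) = Module.finrank ℂ (LinearMap.range (Q : H →ₗ[ℂ] H)))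
    (h : ‖(1 - Q) * P‖ < 1) :
    ‖(1 - P) * Q‖ < 1 ∧
      ‖P - Q‖ = max ‖(1 - Q) * P‖ ‖(1 - P) * Q‖ ∧ ‖P - Q‖ < 1 := by
  have h1Qsa : IsSelfAdjoint (1 - Q) := (IsSelfAdjoint.one (H →L[ℂ] H)).sub hQsa
  have h1Psa : IsSelfAdjoint (1 - P) := (IsSelfAdjoint.one (H →L[ℂ] H)).sub hPsa
  have hQ1 : ‖Q‖ ≤ 1 := proj_norm_le_one Q hQidem hQsa
  have h1Q1 : ‖1 - Q‖ ≤ 1 := proj_norm_le_one (1 - Q) hQidem.one_sub h1Qsa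
  -- ‖P(1-Q)‖ = ‖(1-Q)P‖ by taking star
  have hadj : ‖P * (1 - Q)‖ = ‖(1 - Q) * P‖ := by
    rw [← norm_star ((1 - Q) * P), star_mul, hPsa.star_eq, h1Qsa.star_eq]
  -- injectivity of Q on range P
  have hinj0 : ∀ x ∈ LinearMap.range (P : H →ₗ[ℂ] H), Q x = 0 → x = 0 := by
    intro x hx hQx
    obtain ⟨y, rfl⟩ := hx
    have hPx : P (P y) = P y := proj_apply_apply P hPidem y
    have hval : ((1 - Q) * P) (P y) = P y := by
      simp [ContinuousLinearMap.mul_apply, hPx, show Q (P y) = 0 from hQx]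
    have hle := ContinuousLinearMap.le_opNorm ((1 - Q) * P) (P y)
    rw [hval] at hle
    by_contra hx0
    have hpos : 0 < ‖P y‖ := norm_pos_iff.2 hx0
    nlinarith
  -- the restriction of Q to range P, landing in range Q
  set L : ↥(LinearMap.range (P : H →ₗ[ℂ] H)) →ₗ[ℂ] ↥(LinearMap.range (Q : H →ₗ[ℂ] H)) :=
    LinearMap.restrict (Q : H →ₗ[ℂ] H)
      (fun x _ => LinearMap.mem_range_self (Q : H →ₗ[ℂ] H) x) with hL
  have hLapply : ∀ x : ↥(LinearMap.range (P : H →ₗ[ℂ] H)), (L x : H) = Q (x : H) := fun x => rfl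
  have hLinj : Function.Injective L := by
    rw [← LinearMap.ker_eq_bot, LinearMap.ker_eq_bot']
    intro m hm
    have : Q (m : H) = 0 := by
      have := congrArg (Subtype.val) hm
      simpa [hLapply] using this
    exact Subtype.ext (hinj0 (m : H) m.2 this)
  have hLsurj : Function.Surjective L :=
    (LinearMap.injective_iff_surjective_of_finrank_eq_finrank hrank).mp hLinj
  -- key: no nonzero vector of range Q is killed by P
  have hkey : ∀ v ∈ LinearMap.range (Q : H →ₗ[ℂ] H), P v = 0 → v = 0 := by
    intro v hv hPv
    obtain ⟨w, hw⟩ := hLsurj ⟨v, hv⟩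
    have hQw : Q (w : H) = v := by
      have := congrArg Subtype.val hw
      simpa [hLapply] using this
    have hQv : Q v = v := by
      obtain ⟨u, rfl⟩ := hv
      exact proj_apply_apply Q hQidem u
    have hPw : P (w : H) = (w : H) := by
      obtain ⟨u, hu⟩ := w.2
      rw [← hu]; exact proj_apply_apply P hPidem u
    have : ⟪v, v⟫_ℂ = 0 := by
      calc ⟪v, v⟫_ℂ = ⟪v, Q (w : H)⟫_ℂ := by rw [hQw]
        _ = ⟪Q v, (w : H)⟫_ℂ := (hQsa.isSymmetric v (w : H)).symm
        _ = ⟪v, (w : H)⟫_ℂ := by rw [hQv]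
        _ = ⟪v, P (w : H)⟫_ℂ := by rw [hPw]
        _ = ⟪P v, (w : H)⟫_ℂ := (hPsa.isSymmetric v (w : H)).symm
        _ = 0 := by rw [hPv]; simp
    exact inner_self_eq_zero.mp this
  -- trivial case
  by_cases hQbot : LinearMap.range (Q : H →ₗ[ℂ] H) = ⊥
  · have hQ0 : Q = 0 := by
      ext x
      have : Q x ∈ LinearMap.range (Q : H →ₗ[ℂ] H) := LinearMap.mem_range_self (Q : H →ₗ[ℂ] H) x
      rw [hQbot] at this
      simpa using this
    have hPbot : LinearMap.range (P : H →ₗ[ℂ] H) = ⊥ := by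
      have : Module.finrank ℂ (LinearMap.range (P : H →ₗ[ℂ] H)) = 0 := by
        rw [hrank, hQbot]; simp
      exact Submodule.finrank_eq_zero.mp this
    have hP0 : P = 0 := by
      ext x
      have : P x ∈ LinearMap.range (P : H →ₗ[ℂ] H) := LinearMap.mem_range_self (P : H →ₗ[ℂ] H) x
      rw [hPbot] at this
      simpa using this
    rw [hP0, hQ0]
    norm_num
  -- the maximizer on the unit sphere of range Q
  set S := LinearMap.range (Q : H →ₗ[ℂ] H) with hS
  haveI : ProperSpace ↥S := FiniteDimensional.proper ℂ ↥S
  obtain ⟨x₁, hx₁S, hx₁0⟩ := Submodule.exists_mem_ne_zero_of_ne_bot hQbot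
  have hx₁n : (‖x₁‖ : ℝ) ≠ 0 := norm_ne_zero_iff.2 hx₁0
  have hsphere_ne : ((Metric.sphere (0 : ↥S) 1)).Nonempty := by
    refine ⟨⟨(‖x₁‖ : ℂ)⁻¹ • x₁, S.smul_mem _ hx₁S⟩, ?_⟩
    rw [Metric.mem_sphere, dist_zero_right]
    show ‖(‖x₁‖ : ℂ)⁻¹ • x₁‖ = 1
    rw [norm_smul, norm_inv, Complex.norm_real, Real.norm_eq_abs, abs_norm]
    field_simp
  have hcont : Continuous (fun v : ↥S => ‖(v : H) - P (v : H)‖) :=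
    (continuous_subtype_val.sub (P.continuous.comp continuous_subtype_val)).norm
  obtain ⟨v₀, hv₀mem, hmax⟩ :=
    (isCompact_sphere (0 : ↥S) 1).exists_isMaxOn hsphere_ne hcont.continuousOn
  have hv₀1 : ‖(v₀ : H)‖ = 1 := by
    have := mem_sphere_zero_iff_norm.mp hv₀mem
    simpa using this
  have hPv₀ : P (v₀ : H) ≠ 0 := by
    intro hc
    have := hkey (v₀ : H) v₀.2 hc
    rw [this] at hv₀1
    simp at hv₀1
  have hf1 : ‖(v₀ : H) - P (v₀ : H)‖ < 1 := by
    have hp := proj_pyth P hPidem hPsa (v₀ : H)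
    rw [hv₀1] at hp
    have hpos : 0 < ‖P (v₀ : H)‖ := norm_pos_iff.2 hPv₀
    nlinarith [norm_nonneg ((v₀ : H) - P (v₀ : H))]
  -- ‖(1-P)Q‖ ≤ ‖v₀ - P v₀‖
  have hbound : ∀ y ∈ S, ‖y - P y‖ ≤ ‖(v₀ : H) - P (v₀ : H)‖ * ‖y‖ := by
    intro y hy
    by_cases hy0 : y = 0
    · simp [hy0]
    have hyn : (‖y‖ : ℝ) ≠ 0 := norm_ne_zero_iff.2 hy0
    set v : H := (‖y‖ : ℂ)⁻¹ • y with hv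
    have hvS : v ∈ S := S.smul_mem _ hy
    have hvn : ‖v‖ = 1 := by
      rw [hv, norm_smul, norm_inv, Complex.norm_real, Real.norm_eq_abs, abs_norm]
      field_simp
    have hvsph : (⟨v, hvS⟩ : ↥S) ∈ Metric.sphere (0 : ↥S) 1 := by
      rw [Metric.mem_sphere, dist_zero_right]
      exact hvn
    have hle := hmax hvsph
    simp only [Set.mem_setOf_eq] at hle
    have hle' : ‖v - P v‖ ≤ ‖(v₀ : H) - P (v₀ : H)‖ := hle
    have hyv : y = (‖y‖ : ℂ) • v := by
      rw [hv, smul_inv_smul₀ (by exact_mod_cast hyn)]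
    calc ‖y - P y‖ = ‖(‖y‖ : ℂ) • v - P ((‖y‖ : ℂ) • v)‖ := by rw [← hyv]
      _ = ‖(‖y‖ : ℂ) • (v - P v)‖ := by rw [map_smul, smul_sub]
      _ = ‖y‖ * ‖v - P v‖ := by
          rw [norm_smul, Complex.norm_real, Real.norm_eq_abs, abs_norm]
      _ ≤ ‖y‖ * ‖(v₀ : H) - P (v₀ : H)‖ := by
          exact mul_le_mul_of_nonneg_left hle' (norm_nonneg y)
      _ = ‖(v₀ : H) - P (v₀ : H)‖ * ‖y‖ := mul_comm _ _
  have hblt : ‖(1 - P) * Q‖ < 1 := by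
    refine lt_of_le_of_lt (ContinuousLinearMap.opNorm_le_bound _ (norm_nonneg _) fun x => ?_) hf1
    have happ : ((1 - P) * Q) x = Q x - P (Q x) := by
      simp [ContinuousLinearMap.mul_apply, ContinuousLinearMap.sub_apply]
    rw [happ]
    calc ‖Q x - P (Q x)‖ ≤ ‖(v₀ : H) - P (v₀ : H)‖ * ‖Q x‖ :=
          hbound (Q x) (LinearMap.mem_range_self (Q : H →ₗ[ℂ] H) x)
      _ ≤ ‖(v₀ : H) - P (v₀ : H)‖ * ‖x‖ :=
          mul_le_mul_of_nonneg_left (proj_norm_apply_le Q hQidem hQsa x) (norm_nonneg _)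
  -- lower bounds for ‖P - Q‖
  set a := ‖(1 - Q) * P‖ with ha
  set b := ‖(1 - P) * Q‖ with hb
  have hge1 : b ≤ ‖P - Q‖ := by
    have e1 : (P - Q) * Q = -((1 - P) * Q) := by
      rw [sub_mul, sub_mul, one_mul, hQidem.eq, neg_sub]
    calc b = ‖(P - Q) * Q‖ := by rw [e1, norm_neg]
      _ ≤ ‖P - Q‖ * ‖Q‖ := norm_mul_le _ _
      _ ≤ ‖P - Q‖ := mul_le_of_le_one_right (norm_nonneg _) hQ1
  have hge2 : a ≤ ‖P - Q‖ := by
    have e2 : (P - Q) * (1 - Q) = P * (1 - Q) := by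
      rw [sub_mul, mul_sub Q, mul_one, hQidem.eq, sub_self, sub_zero]
    calc a = ‖P * (1 - Q)‖ := hadj.symm
      _ = ‖(P - Q) * (1 - Q)‖ := by rw [e2]
      _ ≤ ‖P - Q‖ * ‖1 - Q‖ := norm_mul_le _ _
      _ ≤ ‖P - Q‖ := mul_le_of_le_one_right (norm_nonneg _) h1Q1
  -- upper bound
  have hm0 : 0 ≤ max a b := le_trans (norm_nonneg _) (le_max_left a b)
  have hle : ‖P - Q‖ ≤ max a b := by
    refine ContinuousLinearMap.opNorm_le_bound _ hm0 fun x => ?_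
    set z := x - Q x with hz
    set w := Q x with hw
    have hQz : Q z = 0 := by
      rw [hz]; simp [map_sub, hw, proj_apply_apply Q hQidem]
    have hQw : Q w = w := proj_apply_apply Q hQidem x
    -- decomposition
    have hdec : (P - Q) x = P z + (P w - w) := by
      simp only [ContinuousLinearMap.sub_apply, hz, hw, map_sub]
      abel
    -- orthogonality
    have horth : ⟪P z, P w - w⟫_ℂ = 0 := by
      have hs : ⟪P z, P w - w⟫_ℂ = ⟪z, P (P w - w)⟫_ℂ := hPsa.isSymmetric z (P w - w)
      rw [hs, map_sub, proj_apply_apply P hPidem, sub_self, inner_zero_right]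
    have hpyth := norm_add_sq_eq_norm_sq_add_norm_sq_of_inner_eq_zero (P z) (P w - w) horth
    -- bounds on the two pieces
    have hbz : ‖P z‖ ≤ a * ‖z‖ := by
      have : P z = (P * (1 - Q)) z := by
        simp [ContinuousLinearMap.mul_apply, ContinuousLinearMap.sub_apply, hQz]
      rw [this, ← hadj]
      exact ContinuousLinearMap.le_opNorm _ z
    have hbw : ‖P w - w‖ ≤ b * ‖w‖ := by
      have : ((1 - P) * Q) w = w - P w := by
        simp [ContinuousLinearMap.mul_apply, ContinuousLinearMap.sub_apply, hQw]
      rw [← norm_sub_rev, ← this]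
      exact ContinuousLinearMap.le_opNorm _ w
    have hpq := proj_pyth Q hQidem hQsa x
    rw [hdec]
    have hza : a ≤ max a b := le_max_left a b
    have hzb : b ≤ max a b := le_max_right a b
    nlinarith [norm_nonneg (P z), norm_nonneg (P w - w), norm_nonneg z, norm_nonneg w,
      norm_nonneg x, norm_nonneg (P z + (P w - w)), norm_nonneg ((1 - Q) * P),
      norm_nonneg ((1 - P) * Q), mul_le_mul hbz hbz (norm_nonneg _) (by positivity),
      mul_le_mul hbw hbw (norm_nonneg _) (by positivity),
      mul_le_mul hza hza (norm_nonneg _) hm0, mul_le_mul hzb hzb (norm_nonneg _) hm0,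
      mul_nonneg hm0 (norm_nonneg x)]
  have heq : ‖P - Q‖ = max a b := le_antisymm hle (max_le hge2 hge1)
  exact ⟨hblt, heq, heq ▸ max_lt h hblt⟩
end
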